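/- arXiv:math/0610500 — 4 statements merged into one kernel-verified Lean document; each statement's English description precedes it below -/
import Mathlib

section
/- For a restriction category X, the following are equivalent: (i) X has a zero object 0 such that for each object A the zero map 0_{AA} : A → A is a restriction idempotent (restriction zero); (ii) X has an initial object 0 and a terminal object 1, and each unique map z_A : 0 → A is a restriction monic; (iii) X has a terminal object 1 and each unique map t_A : A → 1 is a restriction retraction. -/
open CategoryTheory CategoryTheory.Limits

universe v u

/-- A restriction category: a category with an operation assigning to each
morphism `f : A ⟶ B` a morphism `ρ f : A ⟶ A` satisfying axioms R.1–R.4.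
(Composition is written diagrammatically: `f ≫ g` is "first `f`, then `g`",
so the paper's `g ∘ f` is `f ≫ g`.) -/
class RestrictionCategory (C : Type u) [Category.{v} C] where
  ρ : ∀ {A B : C}, (A ⟶ B) → (A ⟶ A)
  R1 : ∀ {A B : C} (f : A ⟶ B), ρ f ≫ f = f
  R2 : ∀ {A B D : C} (f : A ⟶ B) (g : A ⟶ D), ρ f ≫ ρ g = ρ g ≫ ρ f
  R3 : ∀ {A B D : C} (f : A ⟶ B) (g : A ⟶ D), ρ (ρ f ≫ g) = ρ f ≫ ρ g
  R4 : ∀ {A B D : C} (f : A ⟶ B) (g : B ⟶ D), f ≫ ρ g = ρ (f ≫ g) ≫ f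

open RestrictionCategory

section Aux

variable {C : Type u} [Category.{v} C] [RestrictionCategory C]

lemma rho_id (A : C) : ρ (𝟙 A) = 𝟙 A := by
  simpa using R1 (𝟙 A)

lemma rho_rho {A B : C} (f : A ⟶ B) : ρ (ρ f) = ρ f := by
  have h := R3 f (𝟙 A)
  simpa [rho_id] using h

lemma rho_absorb {A B D : C} (f : A ⟶ B) (g : B ⟶ D) :
    ρ f ≫ ρ (f ≫ g) = ρ (f ≫ g) := by
  have h := R3 f (f ≫ g)
  rw [← h, ← Category.assoc, R1]

lemma rho_comp {A B D : C} (f : A ⟶ B) (g : B ⟶ D) :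
    ρ (f ≫ ρ g) = ρ (f ≫ g) := by
  rw [R4, R3, R2, rho_absorb]

/-- In a restriction zero situation, the zero map `A ⟶ A` equals `ρ` of the
map to the zero object. -/
lemma zero_key {Z : C} (hZ : IsZero Z) (A : C)
    (h : ρ (hZ.from_ A ≫ hZ.to_ A) = hZ.from_ A ≫ hZ.to_ A) :
    hZ.from_ A ≫ hZ.to_ A = ρ (hZ.from_ A) := by
  rw [← h, ← rho_comp, show ρ (hZ.to_ A) = 𝟙 Z from hZ.eq_of_src _ _,
    Category.comp_id]

lemma impl_i_ii
    (h : ∃ (Z : C) (hZ : IsZero Z), ∀ A : C,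
        ρ (hZ.from_ A ≫ hZ.to_ A) = hZ.from_ A ≫ hZ.to_ A) :
    ∃ (O : C) (hO : IsInitial O) (T : C) (_ : IsTerminal T), ∀ A : C,
        ρ (hO.to A) = 𝟙 O ∧
        ∃ m : A ⟶ O, hO.to A ≫ m = 𝟙 O ∧ m ≫ hO.to A = ρ m := by
  obtain ⟨Z, hZ, h⟩ := h
  refine ⟨Z, hZ.isInitial, Z, hZ.isTerminal, fun A => ?_⟩
  refine ⟨hZ.eq_of_src _ _, hZ.from_ A, hZ.eq_of_src _ _, ?_⟩
  have hto : hZ.isInitial.to A = hZ.to_ A := hZ.eq_of_src _ _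
  rw [hto, zero_key hZ A (h A)]

lemma impl_ii_i
    (h : ∃ (O : C) (hO : IsInitial O) (T : C) (_ : IsTerminal T), ∀ A : C,
        ρ (hO.to A) = 𝟙 O ∧
        ∃ m : A ⟶ O, hO.to A ≫ m = 𝟙 O ∧ m ≫ hO.to A = ρ m) :
    ∃ (Z : C) (hZ : IsZero Z), ∀ A : C,
        ρ (hZ.from_ A ≫ hZ.to_ A) = hZ.from_ A ≫ hZ.to_ A := by
  obtain ⟨O, hO, T, hT, h⟩ := h
  obtain ⟨-, m, hm1, -⟩ := h T
  have hZ : IsZero O := by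
    constructor
    · intro Y
      exact ⟨⟨⟨hO.to Y⟩, fun g => hO.hom_ext g (hO.to Y)⟩⟩
    · intro Y
      refine ⟨⟨⟨hT.from Y ≫ m⟩, fun g => ?_⟩⟩
      have : g ≫ hO.to T = hT.from Y := hT.hom_ext _ _
      calc g = g ≫ (hO.to T ≫ m) := by rw [hm1, Category.comp_id]
        _ = (g ≫ hO.to T) ≫ m := by rw [Category.assoc]
        _ = hT.from Y ≫ m := by rw [this]
  refine ⟨O, hZ, fun A => ?_⟩
  obtain ⟨-, mA, -, hmA2⟩ := h A
  have h1 : hZ.from_ A = mA := hZ.eq_of_tgt _ _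
  have h2 : hZ.to_ A = hO.to A := hZ.eq_of_src _ _
  rw [h1, h2, hmA2, rho_rho]

lemma impl_i_iii
    (h : ∃ (Z : C) (hZ : IsZero Z), ∀ A : C,
        ρ (hZ.from_ A ≫ hZ.to_ A) = hZ.from_ A ≫ hZ.to_ A) :
    ∃ (T : C) (hT : IsTerminal T), ∀ A : C,
        ∃ i : T ⟶ A, i ≫ hT.from A = 𝟙 T ∧ hT.from A ≫ i = ρ (hT.from A) := by
  obtain ⟨Z, hZ, h⟩ := h
  refine ⟨Z, hZ.isTerminal, fun A => ⟨hZ.to_ A, hZ.eq_of_src _ _, ?_⟩⟩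
  have hfrom : hZ.isTerminal.from A = hZ.from_ A := hZ.eq_of_tgt _ _
  rw [hfrom, zero_key hZ A (h A)]

lemma impl_iii_ii
    (h : ∃ (T : C) (hT : IsTerminal T), ∀ A : C,
        ∃ i : T ⟶ A, i ≫ hT.from A = 𝟙 T ∧ hT.from A ≫ i = ρ (hT.from A)) :
    ∃ (O : C) (hO : IsInitial O) (T : C) (_ : IsTerminal T), ∀ A : C,
        ρ (hO.to A) = 𝟙 O ∧
        ∃ m : A ⟶ O, hO.to A ≫ m = 𝟙 O ∧ m ≫ hO.to A = ρ m := by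
  obtain ⟨T, hT, h⟩ := h
  have uniq : ∀ (A : C) (g : T ⟶ A), g = (h A).choose := by
    intro A g
    obtain ⟨hi1, hi2⟩ := (h A).choose_spec
    have h1 : g ≫ hT.from A = 𝟙 T := hT.hom_ext _ _
    have h2 := R4 g (hT.from A)
    rw [h1, rho_id, Category.id_comp] at h2
    -- h2 : g ≫ ρ (hT.from A) = g
    rw [← hi2, ← Category.assoc, h1, Category.id_comp] at h2
    exact h2.symm
  have hO : IsInitial T := IsInitial.ofUniqueHom (fun A => (h A).choose)
    (fun A g => uniq A g)
  refine ⟨T, hO, T, hT, fun A => ?_⟩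
  refine ⟨hT.hom_ext _ _, hT.from A, hT.hom_ext _ _, ?_⟩
  have h3 : hO.to A = (h A).choose := uniq A _
  rw [h3, (h A).choose_spec.2]

end Aux

/-- For a restriction category `X`, the following are equivalent:
(i) `X` has a restriction zero: a zero object `Z` such that each zero map
    `A ⟶ A` (through `Z`) is a restriction idempotent;
(ii) `X` has an initial object `O` and a terminal object `T`, and each unique
    map `z_A : O ⟶ A` is a restriction monic (total, with a restriction
    retraction `m` satisfying `z_A ≫ m = 𝟙` and `m ≫ z_A = ρ m`);
(iii) `X` has a terminal object `T` and each unique map `t_A : A ⟶ T` is a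
    restriction retraction (there is `i` with `i ≫ t_A = 𝟙` and
    `t_A ≫ i = ρ t_A`). -/
theorem stmt_7 {C : Type u} [Category.{v} C] [RestrictionCategory C] :
    ((∃ (Z : C) (hZ : IsZero Z), ∀ A : C,
        ρ (hZ.from_ A ≫ hZ.to_ A) = hZ.from_ A ≫ hZ.to_ A) ↔
     (∃ (O : C) (hO : IsInitial O) (T : C) (_ : IsTerminal T), ∀ A : C,
        ρ (hO.to A) = 𝟙 O ∧
        ∃ m : A ⟶ O, hO.to A ≫ m = 𝟙 O ∧ m ≫ hO.to A = ρ m)) ∧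
    ((∃ (O : C) (hO : IsInitial O) (T : C) (_ : IsTerminal T), ∀ A : C,
        ρ (hO.to A) = 𝟙 O ∧
        ∃ m : A ⟶ O, hO.to A ≫ m = 𝟙 O ∧ m ≫ hO.to A = ρ m) ↔
     (∃ (T : C) (hT : IsTerminal T), ∀ A : C,
        ∃ i : T ⟶ A, i ≫ hT.from A = 𝟙 T ∧ hT.from A ≫ i = ρ (hT.from A))) := by
  refine ⟨⟨impl_i_ii, impl_ii_i⟩, ⟨fun h => impl_i_iii (impl_ii_i h), impl_iii_ii⟩⟩
end

section
/- In a restriction category with restriction coproducts and a restriction zero, each coproduct injection i : A → A + B is a restriction monic, whose restriction retraction is ⟨1|0⟩ : A + B → A, and the restriction idempotent i ∘ i* equals 1_A + 0 : A + B → A + B. -/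
open CategoryTheory CategoryTheory.Limits

universe v u

open RestrictionCategory

open ZeroObject

/-- In a restriction category with restriction coproducts (finite coproducts
with total injections) and a restriction zero (zero object, with zero endomaps
being restriction idempotents), each coproduct injection `i : A ⟶ A ⨿ B` is a
restriction monic whose restriction retraction is `⟨1|0⟩ : A ⨿ B ⟶ A`, and
the restriction idempotent `i* ≫ i` equals `1 + 0 : A ⨿ B ⟶ A ⨿ B`. -/
theorem stmt_8 {C : Type u} [Category.{v} C] [RestrictionCategory C]
    [HasBinaryCoproducts C] [HasZeroObject C] [HasZeroMorphisms C]
    (htot : ∀ A B : C, ρ (coprod.inl : A ⟶ A ⨿ B) = 𝟙 A ∧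
      ρ (coprod.inr : B ⟶ A ⨿ B) = 𝟙 B)
    (hzero : ∀ A : C, ρ (0 : A ⟶ A) = (0 : A ⟶ A))
    (A B : C) :
    (coprod.inl : A ⟶ A ⨿ B) ≫ coprod.desc (𝟙 A) (0 : B ⟶ A) = 𝟙 A ∧
    coprod.desc (𝟙 A) (0 : B ⟶ A) ≫ (coprod.inl : A ⟶ A ⨿ B) =
      ρ (coprod.desc (𝟙 A) (0 : B ⟶ A)) ∧
    coprod.desc (𝟙 A) (0 : B ⟶ A) ≫ (coprod.inl : A ⟶ A ⨿ B) =
      coprod.map (𝟙 A) (0 : B ⟶ B) := by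
  have hid : ρ (𝟙 A) = 𝟙 A := by
    have := R1 (𝟙 A); simpa using this
  have hz : ρ (0 : B ⟶ A) = 0 := by
    have h1 : ρ (0 : B ⟶ B) ≫ (0 : B ⟶ A) = (0 : B ⟶ A) := by
      rw [hzero B]; simp
    calc ρ (0 : B ⟶ A) = ρ (ρ (0 : B ⟶ B) ≫ (0 : B ⟶ A)) := by rw [h1]
      _ = ρ (0 : B ⟶ B) ≫ ρ (0 : B ⟶ A) := R3 _ _
      _ = 0 := by rw [hzero B]; simp
  refine ⟨coprod.inl_desc _ _, ?_, ?_⟩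
  · apply coprod.hom_ext
    · rw [R4, coprod.inl_desc, hid]; simp; exact coprod.inl_desc _ _
    · rw [R4, coprod.inr_desc, hz]; simp; exact coprod.inr_desc _ _
  · apply coprod.hom_ext <;> simp
    · exact coprod.inl_desc _ _
    · exact coprod.inr_desc _ _
end

section
/- In a category with both a restriction structure and binary products (ordinary categorical products), for restriction idempotents e, e' on an object A, the restriction overline{⟨e,e'⟩} of the pairing ⟨e,e'⟩ : A → A × A is the join of e and e' in the semilattice of restriction idempotents on A. Consequently this join distributes over meets: e ∧ (e₁ ∨ e₂) = (e ∧ e₁) ∨ (e ∧ e₂). -/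
open CategoryTheory CategoryTheory.Limits

universe v u

open RestrictionCategory


section RCAux
variable {C : Type u} [CategoryTheory.Category.{v} C] [RestrictionCategory C]
open RestrictionCategory

lemma rc_low {A B D : C} (f : A ⟶ B) (g : B ⟶ D) :
    ρ (f ≫ g) ≫ ρ f = ρ (f ≫ g) := by
  have h1 : ρ (f ≫ g) = ρ f ≫ ρ (f ≫ g) := by
    conv_lhs => rw [show f ≫ g = ρ f ≫ (f ≫ g) by
      rw [← CategoryTheory.Category.assoc, R1]]
    rw [R3]
  rw [R2, ← h1]

end RCAux

/-- In a category with a restriction structure and binary products, for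
restriction idempotents `e, e'` on `A`, `overline{⟨e,e'⟩}` is the join of `e`
and `e'` among restriction idempotents on `A` (with order `e ≤ d` iff
`d ∘ e = e`, meet given by composition), and this join distributes over
meets: `e ∧ (e₁ ∨ e₂) = (e ∧ e₁) ∨ (e ∧ e₂)`. -/
theorem stmt_16 {C : Type u} [Category.{v} C] [RestrictionCategory C]
    [HasBinaryProducts C] :
    (∀ (A : C) (e e' : A ⟶ A), ρ e = e → ρ e' = e' →
      (e ≫ ρ (prod.lift e e') = e ∧
       e' ≫ ρ (prod.lift e e') = e' ∧
       ∀ d : A ⟶ A, ρ d = d → e ≫ d = e → e' ≫ d = e' →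
         ρ (prod.lift e e') ≫ d = ρ (prod.lift e e'))) ∧
    (∀ (A : C) (e e₁ e₂ : A ⟶ A), ρ e = e → ρ e₁ = e₁ → ρ e₂ = e₂ →
      e ≫ ρ (prod.lift e₁ e₂) = ρ (prod.lift (e ≫ e₁) (e ≫ e₂))) := by
  constructor
  · intro A e e' he he'
    have hp : prod.lift e e' ≫ prod.fst = e := prod.lift_fst e e'
    have hq : prod.lift e e' ≫ prod.snd = e' := prod.lift_snd e e'
    refine ⟨?_, ?_, ?_⟩
    · have := rc_low (prod.lift e e') (prod.fst (X := A) (Y := A))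
      rwa [hp, he] at this
    · have := rc_low (prod.lift e e') (prod.snd (X := A) (Y := A))
      rwa [hq, he'] at this
    · intro d hd hed he'd
      have hde : d ≫ e = e := by
        have h2 := R2 e d; rw [he, hd] at h2; rw [← h2, hed]
      have hde' : d ≫ e' = e' := by
        have h2 := R2 e' d; rw [he', hd] at h2; rw [← h2, he'd]
      have hdh : d ≫ prod.lift e e' = prod.lift e e' := by
        apply Limits.prod.hom_ext <;> simp [hde, hde']
      have := rc_low d (prod.lift e e')
      rwa [hdh, hd] at this
  · intro A e e₁ e₂ he he₁ he₂
    have hl : prod.lift (e ≫ e₁) (e ≫ e₂) = e ≫ prod.lift e₁ e₂ := by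
      apply Limits.prod.hom_ext <;> simp
    rw [hl]
    conv_lhs => rw [← he]
    rw [← R3, he]
end

section
/- In a restriction category, the restriction limit of a single arrow f : X → Y (i.e. of the diagram consisting of one arrow) is precisely a splitting of the idempotent f̄: a map p : P → X exhibits P as the restriction limit of f if and only if there exists s : X → P with s ∘ p = 1_P and p ∘ s = f̄. -/
open CategoryTheory CategoryTheory.Limits

universe v u

open RestrictionCategory

/-- `p : P ⟶ X` exhibits `P` as the restriction limit of the single-arrow
diagram `f : X ⟶ Y`: the cone (with legs `p` and `p ≫ f`) has total
components, and for every lax cone `(q, q')` (meaning `q' = f ∘ q ∘ ρ q'`)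
there is a unique map `r` with `p ∘ r = q ∘ e` and `(f ∘ p) ∘ r = q' ∘ e`,
where `e` is the composite of the restriction idempotents `ρ q`, `ρ q'`. -/
def IsRestrictionLimitOfArrow {C : Type u} [Category.{v} C]
    [RestrictionCategory C] {X Y P : C} (f : X ⟶ Y) (p : P ⟶ X) : Prop :=
  RestrictionCategory.ρ p = 𝟙 P ∧ RestrictionCategory.ρ (p ≫ f) = 𝟙 P ∧
  ∀ (Q : C) (q : Q ⟶ X) (q' : Q ⟶ Y),
    q' = (RestrictionCategory.ρ q' ≫ q) ≫ f →
    ∃! r : Q ⟶ P,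
      r ≫ p = (RestrictionCategory.ρ q ≫ RestrictionCategory.ρ q') ≫ q ∧
      r ≫ p ≫ f = (RestrictionCategory.ρ q ≫ RestrictionCategory.ρ q') ≫ q'

/-- In a restriction category, the restriction limit of a single arrow
`f : X ⟶ Y` is precisely a splitting of the idempotent `ρ f`:
`p : P ⟶ X` exhibits `P` as the restriction limit of `f` iff there is
`s : X ⟶ P` with `p ≫ s = 𝟙 P` and `s ≫ p = ρ f`. -/
theorem stmt_17 {C : Type u} [Category.{v} C] [RestrictionCategory C]
    {X Y P : C} (f : X ⟶ Y) (p : P ⟶ X) :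
    IsRestrictionLimitOfArrow f p ↔
      ∃ s : X ⟶ P, p ≫ s = 𝟙 P ∧ s ≫ p = ρ f := by
  have rho_id : ∀ (A : C), ρ (𝟙 A) = 𝟙 A := by
    intro A; have := R1 (𝟙 A); simpa using this
  have rho_idem : ∀ {A B : C} (g : A ⟶ B), ρ g ≫ ρ g = ρ g := by
    intro A B g
    conv_rhs => rw [← R1 g]
    rw [R3, ← R1 g]
  have absorb : ∀ {A B D : C} (g : A ⟶ B) (h : B ⟶ D),
      ρ g ≫ ρ (g ≫ h) = ρ (g ≫ h) := by
    intro A B D g h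
    conv_rhs => rw [show g ≫ h = ρ g ≫ (g ≫ h) by rw [← Category.assoc, R1]]
    rw [R3]
  have rho_comp_rho : ∀ {A B D : C} (g : A ⟶ B) (h : B ⟶ D),
      ρ (g ≫ ρ h) = ρ (g ≫ h) := by
    intro A B D g h
    rw [R4, R3, R2, absorb]
  constructor
  · rintro ⟨hp, hpf, hlim⟩
    obtain ⟨s, ⟨hs1, hs2⟩, -⟩ := hlim X (𝟙 X) f (by simp [R1])
    rw [rho_id, Category.id_comp, Category.comp_id] at hs1
    refine ⟨s, ?_, hs1⟩
    obtain ⟨r, ⟨hr1, hr2⟩, hru⟩ := hlim P p (p ≫ f) (by rw [hpf, Category.id_comp])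
    have h1 := hru (𝟙 P) ⟨by simp [hp, hpf], by simp [hp, hpf]⟩
    have h2 := hru (p ≫ s) ⟨by
        rw [hp, hpf, Category.id_comp, Category.id_comp, Category.assoc, hs1,
          R4, hpf, Category.id_comp], by
        simp only [hp, hpf, Category.id_comp, Category.assoc]
        rw [← Category.assoc s p f, hs1, R1]⟩
    rw [h2, ← h1]
  · rintro ⟨s, hs1, hs2⟩
    have hp : ρ p = 𝟙 P := by
      have := absorb p s
      rw [hs1, rho_id, Category.comp_id] at this
      exact this
    have hpf : ρ (p ≫ f) = 𝟙 P := by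
      rw [← rho_comp_rho, ← hs2, ← Category.assoc, hs1, Category.id_comp, hp]
    refine ⟨hp, hpf, fun Q q q' hq => ?_⟩
    have key : ρ q' ≫ q ≫ ρ f = ρ q' ≫ q := by
      rw [R4 q f]
      have : ρ q' ≫ ρ (q ≫ f) = ρ q' := by
        conv_rhs => rw [hq]
        rw [Category.assoc, R3]
      rw [← Category.assoc, this]
    refine ⟨(ρ q ≫ ρ q') ≫ q ≫ s, ⟨?_, ?_⟩, ?_⟩
    · simp only [Category.assoc]
      rw [hs2, key]
    · have hqq : ρ q' ≫ q' = ρ q' ≫ q ≫ f := by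
        rw [R1 q']
        conv_lhs => rw [hq, Category.assoc]
      simp only [Category.assoc]
      rw [← Category.assoc s p f, hs2, R1, hqq]
    · rintro r ⟨hr1, -⟩
      rw [← Category.comp_id r, ← hs1, ← Category.assoc, hr1, Category.assoc]
end
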